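/- Let x, y, z ≥ 0 be real numbers, and let t, k satisfy (1+t)/8 < k, k < 1/(2(1+t)), k < (1−3t)/8, and (2(1+t) − 4k(1+t)²)·((1−3t)/2 − 4k) > (9/4)(1−t²)², with t > −1. If not all of x, y, z are zero and 4(1+t)²x² + 4y² − 4(1+t)z² > 0, then (2(1+t) − 4k(1+t)²)x² − 3|1−t²|xy + ((1−3t)/2 − 4k)y² + (4k(1+t) − (1+t)²/2)z² > 0. -/
import Mathlib

lemma quadratic_aux (p r c a x y z : ℝ) (hp : 0 < p) (hr : 0 < r) (hc : 0 < c)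
    (ha : 0 ≤ a) (hd : 9 * a ^ 2 < 4 * (p * r)) (hy : 0 ≤ y) (hz : 0 ≤ z)
    (hxy : 0 < x ∨ 0 < y) :
    0 < p * x ^ 2 - 3 * a * x * y + r * y ^ 2 + c * z ^ 2 := by
  have hcz : 0 ≤ c * z ^ 2 := mul_nonneg hc.le (sq_nonneg z)
  have hquad : 0 < p * x ^ 2 - 3 * a * x * y + r * y ^ 2 := by
    rcases eq_or_lt_of_le hy with hy0 | hy0
    · subst hy0
      rcases hxy with hx0 | hx0
      · have hpx : 0 < p * x ^ 2 := by positivity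
        nlinarith
      · exact absurd hx0 (lt_irrefl 0)
    · have key : 0 < (2 * p * x - 3 * a * y) ^ 2 + (4 * (p * r) - 9 * a ^ 2) * y ^ 2 := by
        have h1 : 0 < (4 * (p * r) - 9 * a ^ 2) * y ^ 2 :=
          mul_pos (by linarith) (by positivity)
        nlinarith [sq_nonneg (2 * p * x - 3 * a * y)]
      have hQ : 0 < (4 * p) * (p * x ^ 2 - 3 * a * x * y + r * y ^ 2) := by nlinarith
      have h4p : 0 < 4 * p := by linarith
      exact (mul_pos_iff.mp hQ).elim (fun h => h.2)
        (fun h => absurd h.1 (by linarith))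
  linarith

/-- Key quadratic-form positivity estimate for the `SU(2,1)/S¹` example. -/
theorem quadratic_form_positivity (t k x y z : ℝ) (ht : -1 < t)
    (h1 : (1 + t) / 8 < k) (h2 : k < 1 / (2 * (1 + t))) (h3 : k < (1 - 3 * t) / 8)
    (h4 : (2 * (1 + t) - 4 * k * (1 + t) ^ 2) * ((1 - 3 * t) / 2 - 4 * k)
      > (9 / 4) * (1 - t ^ 2) ^ 2)
    (hx : 0 ≤ x) (hy : 0 ≤ y) (hz : 0 ≤ z)
    (hne : ¬(x = 0 ∧ y = 0 ∧ z = 0))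
    (hpos : 4 * (1 + t) ^ 2 * x ^ 2 + 4 * y ^ 2 - 4 * (1 + t) * z ^ 2 > 0) :
    (2 * (1 + t) - 4 * k * (1 + t) ^ 2) * x ^ 2 - 3 * |1 - t ^ 2| * x * y
      + ((1 - 3 * t) / 2 - 4 * k) * y ^ 2
      + (4 * k * (1 + t) - (1 + t) ^ 2 / 2) * z ^ 2 > 0 := by
  have h1t : 0 < 1 + t := by linarith
  have ha2 : |1 - t ^ 2| ^ 2 = (1 - t ^ 2) ^ 2 := sq_abs _
  have ha0 : 0 ≤ |1 - t ^ 2| := abs_nonneg _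
  have hp : 0 < 2 * (1 + t) - 4 * k * (1 + t) ^ 2 := by
    have h2' : 2 * (1 + t) * k < 1 := by
      rw [lt_div_iff₀ (by linarith : (0:ℝ) < 2 * (1 + t))] at h2
      linarith
    nlinarith
  have hr : 0 < (1 - 3 * t) / 2 - 4 * k := by linarith
  have hc : 0 < 4 * k * (1 + t) - (1 + t) ^ 2 / 2 := by nlinarith
  have hd : 9 * |1 - t ^ 2| ^ 2
      < 4 * ((2 * (1 + t) - 4 * k * (1 + t) ^ 2) * ((1 - 3 * t) / 2 - 4 * k)) := by
    rw [ha2]; linarith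
  have hxy : 0 < x ∨ 0 < y := by
    by_contra hcon
    push_neg at hcon
    have hx0 : x = 0 := le_antisymm (hcon.1) hx
    have hy0 : y = 0 := le_antisymm (hcon.2) hy
    rw [hx0, hy0] at hpos
    nlinarith [sq_nonneg z, mul_nonneg h1t.le (sq_nonneg z)]
  have := quadratic_aux _ _ _ _ x y z hp hr hc ha0 hd hy hz hxy
  linarith
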